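/- Let 𝔐 ⊆ ℝ^m and suppose 𝔐 is a C² submanifold of ℝ^m of dimension 𝔯 in a neighborhood of a point x₀ ∈ 𝔐. Then there exists an open neighborhood W of x₀ such that: whenever ŷ ∈ W and x̂ ∈ W ∩ 𝔐 satisfy the stationarity condition ŷ − x̂ ⟂ T_𝔐(x̂) (the tangent space to 𝔐 at x̂), the point x̂ is the unique global minimizer of ‖ŷ − x‖₂² over x ∈ 𝔐. -/

import Mathlib

open scoped RealInnerProductSpace

lemma aux_antilip {F E : Type*} [NormedAddCommGroup F] [NormedSpace ℝ F]
    [FiniteDimensional ℝ F] [NormedAddCommGroup E] [NormedSpace ℝ E]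
    (T : F →L[ℝ] E) (hinj : Function.Injective T) :
    ∃ C : ℝ, 0 < C ∧ ∀ w, ‖w‖ ≤ C * ‖T w‖ := by
  have hinj' : Function.Injective (T : F →ₗ[ℝ] E) := hinj
  let e := LinearEquiv.ofInjective (T : F →ₗ[ℝ] E) hinj'
  let ec := e.toContinuousLinearEquiv
  refine ⟨‖(ec.symm : LinearMap.range (T : F →ₗ[ℝ] E) →L[ℝ] F)‖ + 1, by positivity, fun w => ?_⟩
  have h2 : ‖ec w‖ = ‖T w‖ := rfl
  calc ‖w‖ = ‖ec.symm (ec w)‖ := by rw [ec.symm_apply_apply]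
    _ ≤ ‖(ec.symm : LinearMap.range (T : F →ₗ[ℝ] E) →L[ℝ] F)‖ * ‖ec w‖ :=
        (ec.symm : LinearMap.range (T : F →ₗ[ℝ] E) →L[ℝ] F).le_opNorm _
    _ ≤ _ := by
        rw [h2]
        have := norm_nonneg (T w)
        have := norm_nonneg (ec.symm : LinearMap.range (T : F →ₗ[ℝ] E) →L[ℝ] F)
        nlinarith

lemma aux_orth {E F : Type*} [NormedAddCommGroup E] [InnerProductSpace ℝ E]
    [FiniteDimensional ℝ E] [NormedAddCommGroup F] [InnerProductSpace ℝ F]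
    [FiniteDimensional ℝ F]
    (A : E →L[ℝ] F) (v : E) (hv : ∀ u ∈ LinearMap.ker A.toLinearMap, ⟪v, u⟫ = 0) :
    ∃ w : F, ContinuousLinearMap.adjoint A w = v := by
  set K : Submodule ℝ E := LinearMap.range (ContinuousLinearMap.adjoint A : F →L[ℝ] E).toLinearMap
    with hK
  have hvK : v ∈ Kᗮᗮ := by
    rw [Submodule.mem_orthogonal]
    intro u hu
    have hAu : A u = 0 := by
      have h0 : ⟪(ContinuousLinearMap.adjoint A) (A u), u⟫ = 0 := by
        refine (Submodule.mem_orthogonal K u).mp hu _ ?_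
        exact LinearMap.mem_range_self _ _
      rw [ContinuousLinearMap.adjoint_inner_left] at h0
      exact inner_self_eq_zero.mp h0
    have := hv u (by simpa [LinearMap.mem_ker] using hAu)
    rwa [real_inner_comm] at this
  rw [Submodule.orthogonal_orthogonal] at hvK
  obtain ⟨w, hw⟩ := hvK
  exact ⟨w, hw⟩

set_option maxHeartbeats 1000000 in
theorem stationary_point_is_unique_global_minimizer
    {m 𝔯 : ℕ} {M : Set (EuclideanSpace ℝ (Fin m))}
    {x₀ : EuclideanSpace ℝ (Fin m)} (hx₀ : x₀ ∈ M)
    {U : Set (EuclideanSpace ℝ (Fin m))}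
    {φ : EuclideanSpace ℝ (Fin m) → EuclideanSpace ℝ (Fin (m - 𝔯))}
    (hU : IsOpen U) (hx₀U : x₀ ∈ U)
    (hφ : ContDiffOn ℝ 2 φ U)
    (hsurj : ∀ x ∈ U, Function.Surjective (fderiv ℝ φ x))
    (hMU : M ∩ U = {x ∈ U | φ x = 0}) :
    ∃ W : Set (EuclideanSpace ℝ (Fin m)), IsOpen W ∧ x₀ ∈ W ∧ W ⊆ U ∧
      ∀ yhat ∈ W, ∀ xhat ∈ W ∩ M,
        (∀ v ∈ LinearMap.ker (fderiv ℝ φ xhat).toLinearMap, ⟪yhat - xhat, v⟫ = 0) →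
        ∀ x ∈ M, x ≠ xhat → ‖yhat - xhat‖ ^ 2 < ‖yhat - x‖ ^ 2 := by
  classical
  set A₀ := fderiv ℝ φ x₀ with hA₀def
  -- the adjoint of A₀ is injective
  have hinj : Function.Injective (ContinuousLinearMap.adjoint A₀) := by
    intro w₁ w₂ h
    rw [← sub_eq_zero]
    have h0 : ContinuousLinearMap.adjoint A₀ (w₁ - w₂) = 0 := by
      rw [map_sub, h, sub_self]
    obtain ⟨u, hu⟩ := hsurj x₀ hx₀U (w₁ - w₂)
    have hu' : A₀ u = w₁ - w₂ := hu
    have : ⟪w₁ - w₂, w₁ - w₂⟫ = 0 := by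
      calc ⟪w₁ - w₂, w₁ - w₂⟫ = ⟪w₁ - w₂, A₀ u⟫ := by rw [hu']
        _ = ⟪ContinuousLinearMap.adjoint A₀ (w₁ - w₂), u⟫ :=
            (ContinuousLinearMap.adjoint_inner_left _ _ _).symm
        _ = 0 := by rw [h0, inner_zero_left]
    exact inner_self_eq_zero.mp this
  obtain ⟨C, hCpos, hCb⟩ := aux_antilip (ContinuousLinearMap.adjoint A₀) hinj
  -- Lipschitz bound on the derivative near x₀
  have hc2 : ContDiffAt ℝ 2 φ x₀ := hφ.contDiffAt (hU.mem_nhds hx₀U)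
  have hc1 : ContDiffAt ℝ 1 (fderiv ℝ φ) x₀ := hc2.fderiv_right (by norm_num)
  obtain ⟨K, t, ht, hlip⟩ := hc1.exists_lipschitzOnWith
  set Kr : ℝ := (K : ℝ) + 1 with hKrdef
  have hKrpos : 0 < Kr := by positivity
  have hlip' : ∀ a ∈ t, ∀ b ∈ t, ‖fderiv ℝ φ a - fderiv ℝ φ b‖ ≤ Kr * ‖a - b‖ := by
    intro a ha b hb
    have := hlip.dist_le_mul a ha b hb
    rw [dist_eq_norm, dist_eq_norm] at this
    refine this.trans ?_
    have : (K : ℝ) ≤ Kr := by simp [hKrdef]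
    nlinarith [norm_nonneg (a - b), NNReal.coe_nonneg K]
  -- a closed ball inside U ∩ t
  have hUt : U ∩ t ∈ nhds x₀ := Filter.inter_mem (hU.mem_nhds hx₀U) ht
  obtain ⟨ρ, hρpos, hρsub⟩ := Metric.nhds_basis_closedBall.mem_iff.mp hUt
  -- the radius
  set r : ℝ := min (ρ / 4) (1 / (16 * C * Kr)) with hrdef
  have hrpos : 0 < r := lt_min (by linarith) (by positivity)
  have hr4 : 4 * r ≤ ρ := by
    have := min_le_left (ρ / 4) (1 / (16 * C * Kr))
    rw [← hrdef] at this; linarith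
  have hrC : 16 * C * Kr * r ≤ 1 := by
    have h1 := min_le_right (ρ / 4) (1 / (16 * C * Kr))
    rw [← hrdef] at h1
    have h2 : 0 < 16 * C * Kr := by positivity
    calc 16 * C * Kr * r ≤ 16 * C * Kr * (1 / (16 * C * Kr)) :=
          mul_le_mul_of_nonneg_left h1 h2.le
      _ = 1 := by field_simp
  have hballU : Metric.ball x₀ r ⊆ U :=
    fun z hz => (hρsub (Metric.closedBall_subset_closedBall (by linarith) (Metric.ball_subset_closedBall hz))).1
  have hballt : Metric.closedBall x₀ ρ ⊆ t := fun z hz => (hρsub hz).2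
  have hballU' : Metric.closedBall x₀ ρ ⊆ U := fun z hz => (hρsub hz).1
  refine ⟨Metric.ball x₀ r, Metric.isOpen_ball, Metric.mem_ball_self hrpos, hballU, ?_⟩
  intro yhat hy xhat hxhat horth x hxM hxne
  obtain ⟨hxhatW, hxhatM⟩ := hxhat
  set v := yhat - xhat with hvdef
  have hyx₀ : ‖yhat - x₀‖ < r := by rw [← dist_eq_norm]; exact hy
  have hxhx₀ : ‖xhat - x₀‖ < r := by rw [← dist_eq_norm]; exact hxhatW
  have hvr : ‖v‖ < 2 * r := by
    calc ‖v‖ = ‖(yhat - x₀) - (xhat - x₀)‖ := by rw [hvdef, sub_sub_sub_cancel_right]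
      _ ≤ ‖yhat - x₀‖ + ‖xhat - x₀‖ := norm_sub_le _ _
      _ < 2 * r := by linarith
  by_cases hxball : x ∈ Metric.closedBall x₀ ρ
  · -- near case
    have hxU : x ∈ U := hballU' hxball
    have hφx : φ x = 0 := by
      have : x ∈ M ∩ U := ⟨hxM, hxU⟩
      rw [hMU] at this; exact this.2
    have hxhatball : xhat ∈ Metric.closedBall x₀ ρ :=
      Metric.closedBall_subset_closedBall (by linarith) (Metric.ball_subset_closedBall hxhatW)
    have hφxhat : φ xhat = 0 := by
      have : xhat ∈ M ∩ U := ⟨hxhatM, hballU hxhatW⟩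
      rw [hMU] at this; exact this.2
    set A := fderiv ℝ φ xhat with hAdef
    -- Taylor estimate
    have hseg : segment ℝ xhat x ⊆ Metric.closedBall x₀ ρ :=
      (convex_closedBall _ _).segment_subset hxhatball hxball
    have hseg2 : segment ℝ xhat x ⊆ Metric.closedBall xhat (dist xhat x) :=
      (convex_closedBall _ _).segment_subset (Metric.mem_closedBall_self dist_nonneg)
        (Metric.mem_closedBall.mpr (by rw [dist_comm]))
    have hdiff : ∀ z ∈ segment ℝ xhat x, HasFDerivWithinAt φ (fderiv ℝ φ z) (segment ℝ xhat x) z := by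
      intro z hz
      have hzU : z ∈ U := hballU' (hseg hz)
      exact (((hφ.differentiableOn (by norm_num)).differentiableAt
        (hU.mem_nhds hzU)).hasFDerivAt).hasFDerivWithinAt
    have hbound : ∀ z ∈ segment ℝ xhat x, ‖fderiv ℝ φ z - A‖ ≤ Kr * ‖x - xhat‖ := by
      intro z hz
      have h1 := hlip' z (hballt (hseg hz)) xhat (hballt hxhatball)
      refine h1.trans ?_
      have h2 : ‖z - xhat‖ ≤ ‖x - xhat‖ := by
        have := hseg2 hz
        rw [Metric.mem_closedBall, dist_eq_norm, dist_eq_norm] at this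
        rwa [norm_sub_rev x xhat]
      nlinarith
    have htaylor : ‖φ x - φ xhat - A (x - xhat)‖ ≤ Kr * ‖x - xhat‖ * ‖x - xhat‖ :=
      (convex_segment xhat x).norm_image_sub_le_of_norm_hasFDerivWithin_le' hdiff hbound
        (left_mem_segment ℝ xhat x) (right_mem_segment ℝ xhat x)
    have hAxd : ‖A (x - xhat)‖ ≤ Kr * ‖x - xhat‖ ^ 2 := by
      have h0 : ‖φ x - φ xhat - A (x - xhat)‖ = ‖A (x - xhat)‖ := by
        rw [hφx, hφxhat, sub_self, zero_sub, norm_neg]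
      calc ‖A (x - xhat)‖ = ‖φ x - φ xhat - A (x - xhat)‖ := h0.symm
        _ ≤ Kr * ‖x - xhat‖ * ‖x - xhat‖ := htaylor
        _ = Kr * ‖x - xhat‖ ^ 2 := by ring
    -- adjoint representation of v
    obtain ⟨w, hw⟩ := aux_orth A v horth
    -- bound on ‖w‖
    have hAA₀ : ‖A₀ - A‖ ≤ Kr * r := by
      have h1 := hlip' x₀ (hballt (Metric.mem_closedBall_self hρpos.le)) xhat (hballt hxhatball)
      rw [← hA₀def, ← hAdef] at h1
      refine h1.trans ?_
      have h2 : ‖x₀ - xhat‖ ≤ r := by rw [norm_sub_rev]; exact hxhx₀.le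
      exact mul_le_mul_of_nonneg_left h2 hKrpos.le
    have hadj : ‖ContinuousLinearMap.adjoint A₀ w - ContinuousLinearMap.adjoint A w‖
        ≤ Kr * r * ‖w‖ := by
      have h1 : ContinuousLinearMap.adjoint A₀ w - ContinuousLinearMap.adjoint A w
          = (ContinuousLinearMap.adjoint (A₀ - A)) w := by
        rw [map_sub]; rfl
      rw [h1]
      calc ‖(ContinuousLinearMap.adjoint (A₀ - A)) w‖
          ≤ ‖ContinuousLinearMap.adjoint (A₀ - A)‖ * ‖w‖ :=
            ContinuousLinearMap.le_opNorm _ _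
        _ ≤ Kr * r * ‖w‖ := by
            have h2 : ‖ContinuousLinearMap.adjoint (A₀ - A)‖ = ‖A₀ - A‖ :=
              ContinuousLinearMap.adjoint.norm_map _
            rw [h2]
            exact mul_le_mul_of_nonneg_right hAA₀ (norm_nonneg w)
    have hwbound : ‖w‖ ≤ 2 * C * ‖v‖ := by
      have h1 := hCb w
      have h2 : ‖ContinuousLinearMap.adjoint A₀ w‖ ≤ ‖v‖ + Kr * r * ‖w‖ := by
        calc ‖ContinuousLinearMap.adjoint A₀ w‖
            = ‖ContinuousLinearMap.adjoint A w
              + (ContinuousLinearMap.adjoint A₀ w - ContinuousLinearMap.adjoint A w)‖ := by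
              congr 1; abel
          _ ≤ ‖ContinuousLinearMap.adjoint A w‖
              + ‖ContinuousLinearMap.adjoint A₀ w - ContinuousLinearMap.adjoint A w‖ :=
              norm_add_le _ _
          _ ≤ ‖v‖ + Kr * r * ‖w‖ := add_le_add (le_of_eq (by rw [hw])) hadj
      have h4 : C * (Kr * r) ≤ 1 / 16 := by nlinarith
      have h5 : ‖w‖ ≤ C * ‖v‖ + C * (Kr * r) * ‖w‖ := by
        calc ‖w‖ ≤ C * ‖ContinuousLinearMap.adjoint A₀ w‖ := h1
          _ ≤ C * (‖v‖ + Kr * r * ‖w‖) := mul_le_mul_of_nonneg_left h2 hCpos.le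
          _ = C * ‖v‖ + C * (Kr * r) * ‖w‖ := by ring
      nlinarith [mul_le_mul_of_nonneg_right h4 (norm_nonneg w),
        mul_nonneg hCpos.le (norm_nonneg v)]
    -- the inner product estimate
    have hinner : |⟪v, xhat - x⟫| ≤ 2 * C * ‖v‖ * (Kr * ‖x - xhat‖ ^ 2) := by
      have h1 : ⟪v, xhat - x⟫ = ⟪w, A (xhat - x)⟫ := by
        rw [← hw, ContinuousLinearMap.adjoint_inner_left]
      rw [h1]
      have h2 := abs_real_inner_le_norm w (A (xhat - x))
      have h3 : ‖A (xhat - x)‖ ≤ Kr * ‖x - xhat‖ ^ 2 := by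
        have h4 : A (xhat - x) = -(A (x - xhat)) := by rw [← map_neg]; congr 1; abel
        rw [h4, norm_neg]; exact hAxd
      calc |⟪w, A (xhat - x)⟫| ≤ ‖w‖ * ‖A (xhat - x)‖ := h2
        _ ≤ (2 * C * ‖v‖) * (Kr * ‖x - xhat‖ ^ 2) :=
            mul_le_mul hwbound h3 (norm_nonneg _) (by positivity)
    have hinner2 : |⟪v, xhat - x⟫| ≤ ‖x - xhat‖ ^ 2 / 4 := by
      have hsmall : 2 * C * ‖v‖ * Kr ≤ 1 / 4 := by
        nlinarith [mul_le_mul_of_nonneg_left hvr.le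
          (show (0:ℝ) ≤ 2 * C * Kr by positivity)]
      calc |⟪v, xhat - x⟫| ≤ (2 * C * ‖v‖) * (Kr * ‖x - xhat‖ ^ 2) := hinner
        _ = (2 * C * ‖v‖ * Kr) * ‖x - xhat‖ ^ 2 := by ring
        _ ≤ (1 / 4) * ‖x - xhat‖ ^ 2 :=
            mul_le_mul_of_nonneg_right hsmall (sq_nonneg _)
        _ = ‖x - xhat‖ ^ 2 / 4 := by ring
    -- conclude
    have hexp : ‖yhat - x‖ ^ 2 = ‖v‖ ^ 2 + 2 * ⟪v, xhat - x⟫ + ‖xhat - x‖ ^ 2 := by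
      have : yhat - x = v + (xhat - x) := by rw [hvdef]; abel
      rw [this, norm_add_sq_real]
    have hne : 0 < ‖x - xhat‖ := by
      rw [norm_pos_iff]; exact sub_ne_zero.mpr hxne
    have hrev : ‖xhat - x‖ = ‖x - xhat‖ := norm_sub_rev _ _
    have habs := abs_le.mp hinner2
    rw [hexp, hrev]
    linarith [pow_pos hne 2, habs.1, habs.2]
  · -- far case
    have hfar : ρ < ‖x - x₀‖ := by
      rw [Metric.mem_closedBall, not_le, dist_eq_norm] at hxball; exact hxball
    have h1 : ‖yhat - x‖ ≥ ρ - r := by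
      have h2 := norm_sub_norm_le (x - x₀) (yhat - x₀)
      have h3 : (x - x₀) - (yhat - x₀) = x - yhat := by abel
      rw [h3] at h2
      have h4 : ‖x - yhat‖ = ‖yhat - x‖ := norm_sub_rev _ _
      linarith
    have h2 : ‖v‖ < ‖yhat - x‖ := by
      have : 2 * r < ρ - r := by linarith
      linarith
    have := pow_lt_pow_left₀ h2 (norm_nonneg v) (two_ne_zero)
    simpa [hvdef] using this
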